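/- Let N be a locally compact Hausdorff topological group with left Haar measure μ, M a compact open normal subgroup of N with μ(M) = 1, and σ : M → ℂ a continuous group homomorphism with |σ(m)| = 1 for all m ∈ M, satisfying σ(nmn⁻¹) = σ(m) for all n ∈ N and m ∈ M. Let p : N → ℂ be given by p(y) = σ(y) for y ∈ M, p(y) = 0 otherwise. Then p is central for convolution: for every continuous compactly supported f : N → ℂ and every z ∈ N, ∫_N p(y) f(y⁻¹z) dμ(y) = ∫_N f(y) p(y⁻¹z) dμ(y). -/

import Mathlib

open MeasureTheory Set

section auxcpt
variable {H : Type*} [Group H] [TopologicalSpace H] [IsTopologicalGroup H] [CompactSpace H]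
  [MeasurableSpace H] [BorelSpace H]

lemma aux_haar_eq (ν ν' : Measure H) [ν.IsHaarMeasure] [ν'.IsMulLeftInvariant]
    [IsFiniteMeasure ν'] (h : ν' Set.univ = ν Set.univ) : ν' = ν := by
  have key := Measure.isMulInvariant_eq_smul_of_compactSpace ν' ν
  have h0 : ν Set.univ ≠ 0 := (isOpen_univ.measure_ne_zero ν Set.univ_nonempty)
  have ht : ν Set.univ ≠ ⊤ := measure_ne_top ν _
  rw [key, Measure.smul_apply, ENNReal.smul_def, smul_eq_mul] at h
  have hc : Measure.haarScalarFactor ν' ν = 1 := by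
    have h1 : (Measure.haarScalarFactor ν' ν : ENNReal) = 1 := by
      apply (ENNReal.mul_left_inj h0 ht).1
      rw [h, one_mul]
    exact_mod_cast h1
  rw [key, hc, one_smul]

lemma aux_inv_invariant (ν : Measure H) [ν.IsHaarMeasure] : ν.IsInvInvariant := by
  have hright : ν.IsMulRightInvariant := by
    constructor
    intro g
    have hmeas : Measurable (· * g) := measurable_mul_const g
    haveI : (ν.map (· * g)).IsMulLeftInvariant := by
      constructor
      intro h
      rw [Measure.map_map (measurable_const_mul h) hmeas]
      have : ((h * ·) ∘ (· * g)) = ((· * g) ∘ (h * ·)) := funext fun x => (mul_assoc h x g).symm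
      rw [this, ← Measure.map_map hmeas (measurable_const_mul h), map_mul_left_eq_self]
    haveI : IsFiniteMeasure (ν.map (· * g)) :=
      ⟨by rw [Measure.map_apply hmeas MeasurableSet.univ, Set.preimage_univ]; exact measure_lt_top ν _⟩
    exact aux_haar_eq ν _ (by rw [Measure.map_apply hmeas MeasurableSet.univ, Set.preimage_univ])
  constructor
  haveI : (ν.inv).IsMulLeftInvariant := inferInstance
  haveI : IsFiniteMeasure ν.inv :=
    ⟨by rw [Measure.inv_apply, Set.inv_univ]; exact measure_lt_top ν _⟩
  exact aux_haar_eq ν ν.inv (by rw [Measure.inv_apply, Set.inv_univ])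

end auxcpt

theorem stmt_14 {N : Type*} [Group N] [TopologicalSpace N] [IsTopologicalGroup N]
    [LocallyCompactSpace N] [T2Space N] [MeasurableSpace N] [BorelSpace N]
    (μ : Measure N) [μ.IsHaarMeasure]
    (M : Subgroup N) [M.Normal]
    (hMc : IsCompact (M : Set N)) (hMo : IsOpen (M : Set N))
    (hμM : μ (M : Set N) = 1)
    (σ : M →* ℂ) (hσc : Continuous σ) (hσu : ∀ m : M, ‖σ m‖ = 1)
    (hinv : ∀ (n : N) (m : M) (h : n * (m : N) * n⁻¹ ∈ M), σ ⟨n * (m : N) * n⁻¹, h⟩ = σ m)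
    (p : N → ℂ)
    (hp : ∀ y : N, (∀ h : y ∈ M, p y = σ ⟨y, h⟩) ∧ (y ∉ M → p y = 0))
    (f : N → ℂ) (hfc : Continuous f) (hfs : HasCompactSupport f) :
    ∀ z : N, ∫ y, p y * f (y⁻¹ * z) ∂μ = ∫ y, f y * p (y⁻¹ * z) ∂μ := by
  intro z
  have hnormal : M.Normal := inferInstance
  have hMmeas : MeasurableSet (M : Set N) := hMo.measurableSet
  have hMclosed : IsClosed (M : Set N) := M.isClosed_of_isOpen hMo
  haveI : CompactSpace ↥M := isCompact_iff_compactSpace.mp hMc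
  haveI : BorelSpace ↥M := Subtype.borelSpace (M : Set N)
  have hι : MeasurableEmbedding (Subtype.val : ↥M → N) :=
    MeasurableEmbedding.subtype_coe hMmeas
  set ν : Measure ↥M := μ.comap Subtype.val with hν
  have hν_apply : ∀ s : Set ↥M, ν s = μ (Subtype.val '' s) := fun s => hι.comap_apply μ s
  have hrange : Set.range (Subtype.val : ↥M → N) = (M : Set N) := Subtype.range_coe
  have hν_univ : ν Set.univ = 1 := by
    rw [hν_apply, Set.image_univ, hrange, hμM]
  haveI : IsFiniteMeasure ν := ⟨by rw [hν_univ]; exact ENNReal.one_lt_top⟩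
  haveI hνli : ν.IsMulLeftInvariant := by
    constructor
    intro g
    ext s hs
    rw [Measure.map_apply (measurable_const_mul g) hs, hν_apply, hν_apply]
    have himg : (Subtype.val '' ((g * ·) ⁻¹' s) : Set N)
        = (fun y => (g : N) * y) ⁻¹' (Subtype.val '' s) := by
      ext y
      simp only [Set.mem_image, Set.mem_preimage]
      constructor
      · rintro ⟨m, hm, rfl⟩
        exact ⟨g * m, hm, rfl⟩
      · rintro ⟨n, hn, hn2⟩
        refine ⟨g⁻¹ * n, ?_, ?_⟩
        · simpa using hn
        · push_cast
          rw [hn2]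
          group
    rw [himg, measure_preimage_mul]
  haveI hνop : ν.IsOpenPosMeasure := by
    constructor
    intro U hU hne
    rw [hν_apply]
    have hoe : IsOpenMap (Subtype.val : ↥M → N) := hMo.isOpenMap_subtype_val
    exact (hoe U hU).measure_ne_zero μ (hne.image _)
  haveI hνhaar : ν.IsHaarMeasure :=
    { toIsFiniteMeasureOnCompacts := inferInstance
      toIsMulLeftInvariant := inferInstance
      toIsOpenPosMeasure := inferInstance }
  haveI : ν.IsInvInvariant := aux_inv_invariant ν
  -- transfer lemma
  have key : ∀ h : N → ℂ, Continuous h → (∀ y, y ∉ (M : Set N) → h y = 0) →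
      ∫ y, h y ∂μ = ∫ m, h (↑m) ∂ν := by
    intro h hc h0
    have h1 : ν.map (Subtype.val : ↥M → N) = μ.restrict (M : Set N) := by
      rw [hν, hι.map_comap μ, hrange]
    calc ∫ y, h y ∂μ = ∫ y in (M : Set N), h y ∂μ :=
          (setIntegral_eq_integral_of_forall_compl_eq_zero h0).symm
      _ = ∫ y, h y ∂(ν.map (Subtype.val : ↥M → N)) := by rw [h1]
      _ = ∫ m, h (↑m) ∂ν :=
          integral_map hι.measurable.aemeasurable hc.aestronglyMeasurable
  -- facts about p
  have hpM : ∀ m : ↥M, p ↑m = σ m := fun m => by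
    rw [(hp ↑m).1 m.2]
  have hpc : Continuous p := by
    classical
    have hpq : p = fun y => if h : y ∈ M then (σ ⟨y, h⟩ : ℂ) else 0 := by
      funext y
      by_cases h : y ∈ M
      · rw [(hp y).1 h, dif_pos h]
      · rw [(hp y).2 h, dif_neg h]
    rw [hpq, continuous_iff_continuousAt]
    intro x
    by_cases hx : x ∈ M
    · apply ContinuousOn.continuousAt ?_ (hMo.mem_nhds hx)
      rw [continuousOn_iff_continuous_restrict]
      have hres : (M : Set N).restrict (fun y => if h : y ∈ M then (σ ⟨y, h⟩ : ℂ) else 0)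
          = fun m : (M : Set N) => (σ ⟨m.1, m.2⟩ : ℂ) := by
        funext m
        exact dif_pos m.2
      show Continuous ((M : Set N).restrict (fun y => if h : y ∈ M then (σ ⟨y, h⟩ : ℂ) else 0))
      rw [hres]
      exact hσc.comp (by fun_prop)
    · have hmem : (M : Set N)ᶜ ∈ nhds x := (hMclosed.isOpen_compl).mem_nhds hx
      apply ContinuousAt.congr (continuousAt_const (y := (0 : ℂ)))
      refine Filter.eventuallyEq_of_mem hmem fun y hy => ?_
      show (0 : ℂ) = if h : y ∈ M then (σ ⟨y, h⟩ : ℂ) else 0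
      rw [dif_neg (show ¬ y ∈ M from hy)]
  -- conjugation automorphism
  have hconjmem : ∀ m : ↥M, z * (m : N) * z⁻¹ ∈ M := fun m => hnormal.conj_mem ↑m m.2 z
  let φ : ↥M →* ↥M :=
    { toFun := fun m => ⟨z * (m : N) * z⁻¹, hconjmem m⟩
      map_one' := by ext; simp
      map_mul' := fun a b => by
        ext
        push_cast
        group }
  have hφc : Continuous φ :=
    Continuous.subtype_mk ((continuous_const.mul continuous_subtype_val).mul continuous_const) _
  have hφs : Function.Surjective φ := by
    intro m
    refine ⟨⟨z⁻¹ * (m : N) * z, by simpa using hnormal.conj_mem ↑m m.2 z⁻¹⟩, ?_⟩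
    ext
    show z * (z⁻¹ * (m : N) * z) * z⁻¹ = (m : N)
    group
  have MP : MeasurePreserving φ ν ν := MonoidHom.measurePreserving hφc hφs rfl
  have hσφ : ∀ m : ↥M, σ (φ m) = σ m := fun m => hinv z m (hconjmem m)
  -- LHS computation
  have hL1 : ∫ y, p y * f (y⁻¹ * z) ∂μ = ∫ m : ↥M, σ m * f ((m : N)⁻¹ * z) ∂ν := by
    rw [key (fun y => p y * f (y⁻¹ * z))
      (hpc.mul (hfc.comp ((continuous_inv).mul continuous_const)))
      (fun y hy => by show p y * f (y⁻¹ * z) = 0; rw [(hp y).2 hy, zero_mul])]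
    exact integral_congr_ae (Filter.Eventually.of_forall fun m => by
      show p ↑m * f ((m : N)⁻¹ * z) = σ m * f ((m : N)⁻¹ * z)
      rw [hpM m])
  have hL2 : ∫ m : ↥M, σ m * f ((m : N)⁻¹ * z) ∂ν = ∫ m : ↥M, σ m * f (z * (m : N)⁻¹) ∂ν := by
    have hk : Continuous fun m : ↥M => σ m * f ((m : N)⁻¹ * z) :=
      hσc.mul (hfc.comp ((continuous_subtype_val.inv).mul continuous_const))
    calc ∫ m : ↥M, σ m * f ((m : N)⁻¹ * z) ∂ν
        = ∫ m, (fun m : ↥M => σ m * f ((m : N)⁻¹ * z)) m ∂(ν.map φ) := by rw [MP.map_eq]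
      _ = ∫ m : ↥M, σ (φ m) * f (((φ m : ↥M) : N)⁻¹ * z) ∂ν :=
          integral_map hφc.measurable.aemeasurable hk.aestronglyMeasurable
      _ = ∫ m : ↥M, σ m * f (z * (m : N)⁻¹) ∂ν := by
          refine integral_congr_ae (Filter.Eventually.of_forall fun m => ?_)
          show σ (φ m) * f (((φ m : ↥M) : N)⁻¹ * z) = σ m * f (z * (m : N)⁻¹)
          have hco : ((φ m : ↥M) : N) = z * (m : N) * z⁻¹ := rfl
          rw [hσφ m, hco, show (z * (m : N) * z⁻¹)⁻¹ * z = z * (m : N)⁻¹ by group]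
  have hL3 : ∫ m : ↥M, σ m * f (z * (m : N)⁻¹) ∂ν = ∫ m : ↥M, σ m⁻¹ * f (z * (m : N)) ∂ν := by
    rw [← integral_inv_eq_self (fun m : ↥M => σ m * f (z * (m : N)⁻¹)) ν]
    refine integral_congr_ae (Filter.Eventually.of_forall fun m => ?_)
    show σ m⁻¹ * f (z * ((m⁻¹ : ↥M) : N)⁻¹) = σ m⁻¹ * f (z * (m : N))
    simp
  -- RHS computation
  have hR1 : ∫ y, f y * p (y⁻¹ * z) ∂μ = ∫ y, f (z * y) * p y⁻¹ ∂μ := by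
    rw [← integral_mul_left_eq_self (fun y => f y * p (y⁻¹ * z)) z]
    refine integral_congr_ae (Filter.Eventually.of_forall fun y => ?_)
    show f (z * y) * p ((z * y)⁻¹ * z) = f (z * y) * p y⁻¹
    rw [show (z * y)⁻¹ * z = y⁻¹ by group]
  have hR2 : ∫ y, f (z * y) * p y⁻¹ ∂μ = ∫ m : ↥M, σ m⁻¹ * f (z * (m : N)) ∂ν := by
    rw [key (fun y => f (z * y) * p y⁻¹)
      ((hfc.comp (continuous_const.mul continuous_id)).mul (hpc.comp continuous_inv))
      (fun y hy => by
        show f (z * y) * p y⁻¹ = 0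
        rw [(hp y⁻¹).2 (fun hmem => hy (by simpa using M.inv_mem hmem)), mul_zero])]
    refine integral_congr_ae (Filter.Eventually.of_forall fun m => ?_)
    show f (z * (m : N)) * p ((m : N))⁻¹ = σ m⁻¹ * f (z * (m : N))
    have hcoinv : ((m : N))⁻¹ = ((m⁻¹ : ↥M) : N) := rfl
    rw [hcoinv, hpM m⁻¹, mul_comm]
  rw [hL1, hL2, hL3, hR1, hR2]
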